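/- Let (V, P) be a finite irreducible Markov chain with stationary distribution π and at least two states, and let A_max = max{Ψ_min, Δ_min/2}. Then every eigenvalue λ ∈ ℂ of P, regarded as a complex matrix, with λ ≠ 1 satisfies 1 − |λ| ≥ 16·Ψ_min·A_max. -/

import Mathlib

open scoped Classical

noncomputable section

namespace Stmt16

variable {V : Type*} [Fintype V]

/-- measure of a finite set of states under `pi`. -/
def meas (pi : V → ℝ) (A : Finset V) : ℝ := ∑ x ∈ A, pi x

/-- ergodic flow `Q(A,y) = ∑_{x∈A} π(x)P(x,y)` from a set to a point. -/
def flowPt (P : V → V → ℝ) (pi : V → ℝ) (A : Finset V) (y : V) : ℝ :=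
  ∑ x ∈ A, pi x * P x y

/-- the evolving set `A_u = {y : Q(A,y) ≥ u·π(y)}`. -/
def evolve (P : V → V → ℝ) (pi : V → ℝ) (A : Finset V) (u : ℝ) : Finset V :=
  Finset.univ.filter fun y => u * pi y ≤ flowPt P pi A y

/-- modified ergodic flow `Ψ(A) = (1/2)∫₀¹ |π(A_u) − π(A)| du`. -/
def modFlow (P : V → V → ℝ) (pi : V → ℝ) (A : Finset V) : ℝ :=
  (1 / 2) * ∫ u in (0:ℝ)..1, |meas pi (evolve P pi A u) - meas pi A|

/-- `Ψ_min = min{Ψ(A) : A a nonempty proper subset}`. -/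
def psiMin (P : V → V → ℝ) (pi : V → ℝ) : ℝ :=
  sInf {r | ∃ A : Finset V, A.Nonempty ∧ A ≠ Finset.univ ∧ r = modFlow P pi A}

/-- `Δ_min = min{|π(A) − π(B)| : π(A) ≠ π(B)}`. -/
def deltaMin (pi : V → ℝ) : ℝ :=
  sInf {r | ∃ A B : Finset V, meas pi A ≠ meas pi B ∧ r = |meas pi A - meas pi B|}

/-- `A_max = max{Ψ_min, Δ_min/2}`. -/
def aMax (P : V → V → ℝ) (pi : V → ℝ) : ℝ :=
  max (psiMin P pi) (deltaMin pi / 2)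

open MeasureTheory intervalIntegral in
lemma intInd {S : Set ℝ} (hS : MeasurableSet S) (c : ℝ) :
    IntervalIntegrable (S.indicator fun _ => c) volume (0:ℝ) 1 := by
  rw [intervalIntegrable_iff]
  refine ((MeasureTheory.integrableOn_const_iff (C := c)).mpr (Or.inr ?_)).indicator hS
  rw [Set.uIoc_of_le zero_le_one]
  exact measure_Ioc_lt_top

open MeasureTheory in
lemma measSet_evolve (P : V → V → ℝ) (pi : V → ℝ) (A : Finset V) (B : Finset V) :
    MeasurableSet {u : ℝ | evolve P pi A u = B} := by
  have h : {u : ℝ | evolve P pi A u = B}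
      = ⋂ z : V, {u : ℝ | (u * pi z ≤ flowPt P pi A z) ↔ z ∈ B} := by
    ext u
    simp only [Set.mem_setOf_eq, Set.mem_iInter, Finset.ext_iff, evolve, Finset.mem_filter,
      Finset.mem_univ, true_and]
  rw [h]
  refine MeasurableSet.iInter fun z => ?_
  by_cases hz : z ∈ B
  · simp only [hz, iff_true]
    exact measurableSet_le (measurable_id.mul_const _) measurable_const
  · simp only [hz, iff_false]
    exact (measurableSet_le (measurable_id.mul_const _) measurable_const).compl

open MeasureTheory in
lemma intComp (P : V → V → ℝ) (pi : V → ℝ) (A : Finset V) (F : Finset V → ℝ) :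
    IntervalIntegrable (fun u => F (evolve P pi A u)) volume (0:ℝ) 1 := by
  have hrep : (fun u => F (evolve P pi A u))
      = fun u => ∑ B : Finset V,
          ({u : ℝ | evolve P pi A u = B}.indicator (fun _ => F B)) u := by
    funext u
    rw [Finset.sum_eq_single (evolve P pi A u)]
    · exact (Set.indicator_of_mem rfl _).symm
    · intro B _ hB
      exact Set.indicator_of_notMem (fun h => hB ((Set.mem_setOf_eq ▸ h).symm)) _
    · intro h; exact absurd (Finset.mem_univ _) h
  have hsum : IntervalIntegrable
      (fun u => ∑ B : Finset V,
          ({u : ℝ | evolve P pi A u = B}.indicator (fun _ => F B)) u) volume (0:ℝ) 1 := by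
    rw [intervalIntegrable_iff]
    exact MeasureTheory.integrable_finset_sum _ fun B _ =>
      intervalIntegrable_iff.mp (intInd (measSet_evolve P pi A B) (F B))
  exact hrep ▸ hsum

open MeasureTheory intervalIntegral in
lemma intIte (c q p : ℝ) (hp : 0 < p) (hq0 : 0 ≤ q) (hq1 : q ≤ p) :
    ∫ u in (0:ℝ)..1, (if u * p ≤ q then c else 0) = c * (q / p) := by
  set t := q / p with ht
  have ht0 : 0 ≤ t := div_nonneg hq0 hp.le
  have ht1 : t ≤ 1 := (div_le_one hp).mpr hq1
  have hiff : ∀ u : ℝ, (u * p ≤ q) ↔ u ≤ t := fun u => (le_div_iff₀ hp).symm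
  have hind : (fun u : ℝ => if u * p ≤ q then c else 0)
      = (Set.Iic t).indicator fun _ => c := by
    funext u; simp [Set.indicator, Set.mem_Iic, hiff u]
  have hint : IntervalIntegrable (fun u : ℝ => if u * p ≤ q then c else 0) volume 0 1 := by
    rw [hind]; exact intInd measurableSet_Iic c
  have h1 : IntervalIntegrable (fun u : ℝ => if u * p ≤ q then c else 0) volume 0 t := by
    refine hint.mono_set ?_
    rw [Set.uIcc_of_le ht0, Set.uIcc_of_le zero_le_one]
    exact Set.Icc_subset_Icc le_rfl ht1
  have h2 : IntervalIntegrable (fun u : ℝ => if u * p ≤ q then c else 0) volume t 1 := by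
    refine hint.mono_set ?_
    rw [Set.uIcc_of_le ht1, Set.uIcc_of_le zero_le_one]
    exact Set.Icc_subset_Icc ht0 le_rfl
  rw [← integral_add_adjacent_intervals h1 h2]
  have e1 : ∫ u in (0:ℝ)..t, (if u * p ≤ q then c else 0) = c * t := by
    have hEq : Set.EqOn (fun u : ℝ => if u * p ≤ q then c else 0) (fun _ => c)
        (Set.uIcc 0 t) := by
      intro u hu
      rw [Set.uIcc_of_le ht0] at hu
      exact if_pos ((hiff u).mpr hu.2)
    rw [integral_congr hEq, intervalIntegral.integral_const, smul_eq_mul, sub_zero, mul_comm]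
  have e2 : ∫ u in t..(1:ℝ), (if u * p ≤ q then c else 0) = 0 := by
    have hEq : ∀ᵐ u ∂(volume : Measure ℝ), u ∈ Set.uIoc t 1 →
        (if u * p ≤ q then c else 0) = (fun _ => (0:ℝ)) u := by
      refine Filter.Eventually.of_forall fun u hu => ?_
      rw [Set.uIoc_of_le ht1] at hu
      exact if_neg (by rw [hiff u]; exact not_le.mpr hu.1)
    rw [integral_congr_ae hEq, intervalIntegral.integral_const, smul_eq_mul, mul_zero]
  rw [e1, e2, add_zero]
section Part2

variable {V : Type*} [Fintype V] {P : V → V → ℝ} {pi : V → ℝ}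

lemma meas_nonneg (hpi0 : ∀ x, 0 < pi x) (A : Finset V) : 0 ≤ meas pi A :=
  Finset.sum_nonneg fun x _ => (hpi0 x).le

lemma meas_le_one (hpi0 : ∀ x, 0 < pi x) (hpi1 : ∑ x, pi x = 1) (A : Finset V) :
    meas pi A ≤ 1 := by
  rw [← hpi1]
  exact Finset.sum_le_sum_of_subset_of_nonneg (Finset.subset_univ A)
    fun x _ _ => (hpi0 x).le

lemma flow_nonneg (hP0 : ∀ x y, 0 ≤ P x y) (hpi0 : ∀ x, 0 < pi x) (A : Finset V) (z : V) :
    0 ≤ flowPt P pi A z :=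
  Finset.sum_nonneg fun x _ => mul_nonneg (hpi0 x).le (hP0 x z)

lemma flow_le (hP0 : ∀ x y, 0 ≤ P x y) (hpi0 : ∀ x, 0 < pi x)
    (hstat : ∀ y, ∑ x, pi x * P x y = pi y) (A : Finset V) (z : V) :
    flowPt P pi A z ≤ pi z := by
  rw [← hstat z]
  exact Finset.sum_le_sum_of_subset_of_nonneg (Finset.subset_univ A)
    fun x _ _ => mul_nonneg (hpi0 x).le (hP0 x z)

lemma sum_flow (hP1 : ∀ x, ∑ y, P x y = 1) (A : Finset V) :
    ∑ z, flowPt P pi A z = meas pi A := by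
  unfold flowPt meas
  rw [Finset.sum_comm]
  refine Finset.sum_congr rfl fun x _ => ?_
  rw [← Finset.mul_sum, hP1 x, mul_one]

set_option maxHeartbeats 1000000 in
open MeasureTheory in
lemma int_evolve_sum (hP0 : ∀ x y, 0 ≤ P x y) (hpi0 : ∀ x, 0 < pi x)
    (hstat : ∀ y, ∑ x, pi x * P x y = pi y) (A : Finset V) (w : V → ℝ) :
    ∫ u in (0:ℝ)..1, (∑ z ∈ evolve P pi A u, w z)
      = ∑ z, (flowPt P pi A z / pi z) * w z := by
  have hrw : ∀ u : ℝ, (∑ z ∈ evolve P pi A u, w z)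
      = ∑ z : V, (if u * pi z ≤ flowPt P pi A z then w z else 0) := by
    intro u
    rw [evolve, Finset.sum_filter]
  have hint : ∀ z : V, IntervalIntegrable
      (fun u : ℝ => if u * pi z ≤ flowPt P pi A z then w z else 0) volume (0:ℝ) 1 := by
    intro z
    have : (fun u : ℝ => if u * pi z ≤ flowPt P pi A z then w z else 0)
        = fun u => (if z ∈ evolve P pi A u then w z else 0) := by
      funext u; simp [evolve]
    rw [this]
    exact intComp P pi A (fun B => if z ∈ B then w z else 0)
  calc ∫ u in (0:ℝ)..1, (∑ z ∈ evolve P pi A u, w z)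
      = ∫ u in (0:ℝ)..1, ∑ z : V, (if u * pi z ≤ flowPt P pi A z then w z else 0) := by
        simp only [hrw]
    _ = ∑ z : V, ∫ u in (0:ℝ)..1, (if u * pi z ≤ flowPt P pi A z then w z else 0) :=
        intervalIntegral.integral_finset_sum fun z _ => hint z
    _ = ∑ z, (flowPt P pi A z / pi z) * w z := by
        refine Finset.sum_congr rfl fun z _ => ?_
        rw [intIte (w z) _ _ (hpi0 z) (flow_nonneg hP0 hpi0 A z) (flow_le hP0 hpi0 hstat A z)]
        ring

open MeasureTheory in
lemma int_meas_evolve (hP0 : ∀ x y, 0 ≤ P x y) (hP1 : ∀ x, ∑ y, P x y = 1)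
    (hpi0 : ∀ x, 0 < pi x) (hstat : ∀ y, ∑ x, pi x * P x y = pi y) (A : Finset V) :
    ∫ u in (0:ℝ)..1, meas pi (evolve P pi A u) = meas pi A := by
  have h := int_evolve_sum hP0 hpi0 hstat A pi
  have h2 : ∑ z, (flowPt P pi A z / pi z) * pi z = meas pi A := by
    rw [← sum_flow hP1 A]
    exact Finset.sum_congr rfl fun z _ => div_mul_cancel₀ _ (hpi0 z).ne'
  rw [← h2, ← h]
  rfl

end Part2
section Part3

set_option linter.unusedSectionVars false

variable {V : Type*} [Fintype V] {P : V → V → ℝ} {pi : V → ℝ}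

open MeasureTheory intervalIntegral

lemma modFlow_nonneg (A : Finset V) : 0 ≤ modFlow P pi A := by
  rw [modFlow]
  exact mul_nonneg (by norm_num)
    (integral_nonneg zero_le_one fun u _ => abs_nonneg _)

lemma psiMin_nonneg : 0 ≤ psiMin P pi :=
  Real.sInf_nonneg fun r ⟨A, _, _, hr⟩ => hr ▸ modFlow_nonneg A

lemma psiMin_le {A : Finset V} (h1 : A.Nonempty) (h2 : A ≠ Finset.univ) :
    psiMin P pi ≤ modFlow P pi A :=
  csInf_le ⟨0, fun r ⟨B, _, _, hr⟩ => hr ▸ modFlow_nonneg B⟩ ⟨A, h1, h2, rfl⟩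

lemma deltaMin_nonneg : 0 ≤ deltaMin pi :=
  Real.sInf_nonneg fun r ⟨_, _, _, hr⟩ => hr ▸ abs_nonneg _

lemma deltaMin_le {A B : Finset V} (h : meas pi A ≠ meas pi B) :
    deltaMin pi ≤ |meas pi A - meas pi B| :=
  csInf_le ⟨0, fun r ⟨_, _, _, hr⟩ => hr ▸ abs_nonneg _⟩ ⟨A, B, h, rfl⟩

lemma aMax_nonneg : 0 ≤ aMax P pi := le_trans psiMin_nonneg (le_max_left _ _)

/-- the integral identity `∫ h(X) = h(m) - Var` -/
lemma int_h_eq (hP0 : ∀ x y, 0 ≤ P x y) (hP1 : ∀ x, ∑ y, P x y = 1)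
    (hpi0 : ∀ x, 0 < pi x) (hstat : ∀ y, ∑ x, pi x * P x y = pi y) (A : Finset V) :
    ∫ u in (0:ℝ)..1, (meas pi (evolve P pi A u) * (1 - meas pi (evolve P pi A u)))
      = meas pi A * (1 - meas pi A)
        - ∫ u in (0:ℝ)..1, (meas pi (evolve P pi A u) - meas pi A)^2 := by
  set m := meas pi A with hm
  have hX : IntervalIntegrable (fun u => meas pi (evolve P pi A u)) volume (0:ℝ) 1 :=
    intComp P pi A (fun B => meas pi B)
  have hX2 : IntervalIntegrable (fun u => (meas pi (evolve P pi A u) - m)^2) volume (0:ℝ) 1 :=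
    intComp P pi A (fun B => (meas pi B - m)^2)
  have hXm : ∫ u in (0:ℝ)..1, meas pi (evolve P pi A u) = m :=
    int_meas_evolve hP0 hP1 hpi0 hstat A
  have hpt : ∀ u : ℝ, meas pi (evolve P pi A u) * (1 - meas pi (evolve P pi A u))
      = (m*(1-m) - (meas pi (evolve P pi A u) - m)^2)
        + (1-2*m)*(meas pi (evolve P pi A u) - m) := fun u => by ring
  have int1 : IntervalIntegrable
      (fun u => m*(1-m) - (meas pi (evolve P pi A u) - m)^2) volume (0:ℝ) 1 :=
    (_root_.intervalIntegrable_const).sub hX2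
  have int2 : IntervalIntegrable
      (fun u => (1-2*m)*(meas pi (evolve P pi A u) - m)) volume (0:ℝ) 1 :=
    (hX.sub _root_.intervalIntegrable_const).const_mul _
  calc ∫ u in (0:ℝ)..1, (meas pi (evolve P pi A u) * (1 - meas pi (evolve P pi A u)))
      = ∫ u in (0:ℝ)..1, ((m*(1-m) - (meas pi (evolve P pi A u) - m)^2)
          + (1-2*m)*(meas pi (evolve P pi A u) - m)) := by simp only [hpt]
    _ = (∫ u in (0:ℝ)..1, (m*(1-m) - (meas pi (evolve P pi A u) - m)^2))
          + ∫ u in (0:ℝ)..1, (1-2*m)*(meas pi (evolve P pi A u) - m) :=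
        integral_add int1 int2
    _ = m*(1-m) - ∫ u in (0:ℝ)..1, (meas pi (evolve P pi A u) - m)^2 := by
        rw [integral_sub _root_.intervalIntegrable_const hX2, intervalIntegral.integral_const,
          intervalIntegral.integral_const_mul, integral_sub hX _root_.intervalIntegrable_const, hXm,
          intervalIntegral.integral_const]
        simp only [smul_eq_mul, sub_zero, one_mul]
        ring

/-- main variance lower bound -/
lemma var_ge (hP0 : ∀ x y, 0 ≤ P x y) (hP1 : ∀ x, ∑ y, P x y = 1)
    (hpi0 : ∀ x, 0 < pi x) (hpi1 : ∑ x, pi x = 1)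
    (hstat : ∀ y, ∑ x, pi x * P x y = pi y) (A : Finset V) :
    16 * psiMin P pi * aMax P pi * (meas pi A * (1 - meas pi A))
      ≤ ∫ u in (0:ℝ)..1, (meas pi (evolve P pi A u) - meas pi A)^2 := by
  set m := meas pi A with hm
  have hI0 : 0 ≤ ∫ u in (0:ℝ)..1, (meas pi (evolve P pi A u) - m)^2 :=
    integral_nonneg zero_le_one fun u _ => sq_nonneg _
  by_cases hA : A.Nonempty ∧ A ≠ Finset.univ
  · obtain ⟨h1, h2⟩ := hA
    set ψ := modFlow P pi A with hψ
    have habs : IntervalIntegrable (fun u => |meas pi (evolve P pi A u) - m|) volume (0:ℝ) 1 :=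
      intComp P pi A (fun B => |meas pi B - m|)
    have hX2 : IntervalIntegrable (fun u => (meas pi (evolve P pi A u) - m)^2) volume (0:ℝ) 1 :=
      intComp P pi A (fun B => (meas pi B - m)^2)
    set J := ∫ u in (0:ℝ)..1, |meas pi (evolve P pi A u) - m| with hJ
    have hJψ : J = 2 * ψ := by rw [hψ, modFlow]; ring
    have hJ0 : 0 ≤ J := integral_nonneg zero_le_one fun u _ => abs_nonneg _
    set I := ∫ u in (0:ℝ)..1, (meas pi (evolve P pi A u) - m)^2 with hI
    -- Bound 1 : J^2 ≤ I
    have hb1 : J^2 ≤ I := by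
      have hpt : ∀ u ∈ Set.Icc (0:ℝ) 1, 2*J*|meas pi (evolve P pi A u) - m|
          ≤ (meas pi (evolve P pi A u) - m)^2 + J^2 := by
        intro u _
        nlinarith [sq_nonneg (|meas pi (evolve P pi A u) - m| - J), sq_abs (meas pi (evolve P pi A u) - m)]
      have := integral_mono_on zero_le_one (habs.const_mul (2*J))
        (hX2.add _root_.intervalIntegrable_const) hpt
      rw [intervalIntegral.integral_const_mul, integral_add hX2 _root_.intervalIntegrable_const,
        intervalIntegral.integral_const, smul_eq_mul] at this
      rw [← hJ, ← hI] at this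
      nlinarith [this]
    -- Bound 2 : deltaMin * J ≤ I
    have hb2 : deltaMin pi * J ≤ I := by
      have hpt : ∀ u ∈ Set.Icc (0:ℝ) 1, deltaMin pi * |meas pi (evolve P pi A u) - m|
          ≤ (meas pi (evolve P pi A u) - m)^2 := by
        intro u _
        by_cases he : meas pi (evolve P pi A u) = m
        · simp [he]
        · have hd := deltaMin_le (pi := pi) (A := evolve P pi A u) (B := A) (by rw [← hm]; exact he)
          calc deltaMin pi * |meas pi (evolve P pi A u) - m|
              ≤ |meas pi (evolve P pi A u) - m| * |meas pi (evolve P pi A u) - m| :=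
                mul_le_mul_of_nonneg_right (hm ▸ hd) (abs_nonneg _)
            _ = (meas pi (evolve P pi A u) - m)^2 := by
                rw [abs_mul_abs_self]; ring
      have := integral_mono_on zero_le_one (habs.const_mul (deltaMin pi)) hX2 hpt
      rw [intervalIntegral.integral_const_mul] at this
      rw [← hJ, ← hI] at this
      exact this
    -- combine
    have hψmin : psiMin P pi ≤ ψ := psiMin_le h1 h2
    have hψ0 : 0 ≤ psiMin P pi := psiMin_nonneg
    have hΔ0 : 0 ≤ deltaMin pi := deltaMin_nonneg
    have h4 : 4 * psiMin P pi ^ 2 ≤ I := by nlinarith [hb1, hJψ, hψmin, hψ0]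
    have h5 : 2 * deltaMin pi * psiMin P pi ≤ I := by nlinarith [hb2, hJψ, hψmin, hψ0, hΔ0]
    have hm14 : m * (1 - m) ≤ 1/4 := by nlinarith [sq_nonneg (1 - 2*m)]
    have hm0 : 0 ≤ m * (1 - m) := by
      have h1' : 0 ≤ m := meas_nonneg hpi0 A
      have h2' : m ≤ 1 := meas_le_one hpi0 hpi1 A
      nlinarith
    rcases max_choice (psiMin P pi) (deltaMin pi / 2) with h | h <;> rw [aMax, h]
    · nlinarith [mul_nonneg hψ0 hψ0, h4, hm14, hm0, sq_nonneg (psiMin P pi)]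
    · nlinarith [mul_nonneg hψ0 hΔ0, h5, hm14, hm0]
  · have hm0 : m * (1 - m) = 0 := by
      rcases not_and_or.mp hA with h | h
      · have : A = ∅ := Finset.not_nonempty_iff_eq_empty.mp h
        simp [hm, this, meas]
      · rw [not_not] at h
        have : m = 1 := by rw [hm, h, meas]; exact hpi1
        rw [this]; ring
    rw [hm0, mul_zero]
    exact hI0

end Part3
section Part4

set_option linter.unusedSectionVars false

variable {V : Type*} [Fintype V] {P : V → V → ℝ} {pi : V → ℝ}

open MeasureTheory intervalIntegral

/-- the key one-step contraction -/
lemma key_step (hP0 : ∀ x y, 0 ≤ P x y) (hP1 : ∀ x, ∑ y, P x y = 1)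
    (hpi0 : ∀ x, 0 < pi x) (hpi1 : ∑ x, pi x = 1)
    (hstat : ∀ y, ∑ x, pi x * P x y = pi y) (A : Finset V) :
    ∫ u in (0:ℝ)..1, (meas pi (evolve P pi A u) * (1 - meas pi (evolve P pi A u)))
      ≤ (1 - 16 * psiMin P pi * aMax P pi) * (meas pi A * (1 - meas pi A)) := by
  have h1 := int_h_eq hP0 hP1 hpi0 hstat A
  have h2 := var_ge hP0 hP1 hpi0 hpi1 hstat A
  rw [h1]
  nlinarith [h2]

lemma delta_le_one (hP0 : ∀ x y, 0 ≤ P x y) (hP1 : ∀ x, ∑ y, P x y = 1)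
    (hpi0 : ∀ x, 0 < pi x) (hpi1 : ∑ x, pi x = 1)
    (hstat : ∀ y, ∑ x, pi x * P x y = pi y) (hcard : 2 ≤ Fintype.card V) :
    16 * psiMin P pi * aMax P pi ≤ 1 := by
  obtain ⟨x₀, x₁, hx⟩ := Fintype.exists_pair_of_one_lt_card (α := V) (by omega)
  set A : Finset V := {x₀} with hA
  have hm : meas pi A = pi x₀ := by rw [hA, meas, Finset.sum_singleton]
  have hm0 : 0 < meas pi A := hm ▸ hpi0 x₀
  have hsum2 : pi x₀ + pi x₁ ≤ 1 := by
    calc pi x₀ + pi x₁ = ∑ z ∈ ({x₀, x₁} : Finset V), pi z := (Finset.sum_pair hx).symm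
      _ ≤ ∑ z, pi z := Finset.sum_le_sum_of_subset_of_nonneg (Finset.subset_univ _)
          (fun z _ _ => (hpi0 z).le)
      _ = 1 := hpi1
  have hm1 : meas pi A < 1 := by
    have := hpi0 x₁; rw [hm]; linarith
  have hIle : ∫ u in (0:ℝ)..1, (meas pi (evolve P pi A u) - meas pi A)^2
      ≤ meas pi A * (1 - meas pi A) := by
    have h1 := int_h_eq hP0 hP1 hpi0 hstat A
    have hpos : 0 ≤ ∫ u in (0:ℝ)..1,
        (meas pi (evolve P pi A u) * (1 - meas pi (evolve P pi A u))) := by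
      refine integral_nonneg zero_le_one fun u _ => ?_
      have h0 := meas_nonneg hpi0 (evolve P pi A u)
      have h1' := meas_le_one hpi0 hpi1 (evolve P pi A u)
      nlinarith
    linarith
  have h2 := var_ge hP0 hP1 hpi0 hpi1 hstat A
  have hmm : 0 < meas pi A * (1 - meas pi A) := by nlinarith
  nlinarith

/-- iterated flow under matrix powers -/
def Qmat (P : V → V → ℝ) (pi : V → ℝ) (n : ℕ) (A : Finset V) (y : V) : ℝ :=
  ∑ x ∈ A, pi x * (Matrix.of P ^ n) x y

/-- deterministic version of `E[ |1_{y ∈ S_n} - pi(S_n)| ]` for the evolving set chain -/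
def rfun (P : V → V → ℝ) (pi : V → ℝ) : ℕ → Finset V → V → ℝ
  | 0 => fun A y => |(if y ∈ A then (1:ℝ) else 0) - meas pi A|
  | n+1 => fun A y => ∫ u in (0:ℝ)..1, rfun P pi n (evolve P pi A u) y

lemma rfun_zero (A : Finset V) (y : V) :
    rfun P pi 0 A y = |(if y ∈ A then (1:ℝ) else 0) - meas pi A| := rfl

lemma rfun_succ (n : ℕ) (A : Finset V) (y : V) :
    rfun P pi (n+1) A y = ∫ u in (0:ℝ)..1, rfun P pi n (evolve P pi A u) y := rfl

lemma rfun_nonneg : ∀ (n : ℕ) (A : Finset V) (y : V), 0 ≤ rfun P pi n A y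
  | 0, A, y => abs_nonneg _
  | n+1, A, y => integral_nonneg zero_le_one fun u _ => rfun_nonneg n _ y

lemma rfun_sum (hP0 : ∀ x y, 0 ≤ P x y) (hP1 : ∀ x, ∑ y, P x y = 1)
    (hpi0 : ∀ x, 0 < pi x) (hpi1 : ∑ x, pi x = 1)
    (hstat : ∀ y, ∑ x, pi x * P x y = pi y) (hcard : 2 ≤ Fintype.card V) :
    ∀ (n : ℕ) (A : Finset V),
    ∑ y, pi y * rfun P pi n A y
      ≤ 2 * (1 - 16 * psiMin P pi * aMax P pi)^n * (meas pi A * (1 - meas pi A)) := by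
  intro n
  induction n with
  | zero =>
    intro A
    have hm0 : 0 ≤ meas pi A := meas_nonneg hpi0 A
    have hm1 : meas pi A ≤ 1 := meas_le_one hpi0 hpi1 A
    have hcompute : ∑ y, pi y * rfun P pi 0 A y
        = 2 * (meas pi A * (1 - meas pi A)) := by
      have hterm : ∀ y, pi y * rfun P pi 0 A y
          = if y ∈ A then pi y * (1 - meas pi A) else pi y * meas pi A := by
        intro y
        rw [rfun_zero]
        by_cases hy : y ∈ A
        · rw [if_pos hy, if_pos hy, abs_of_nonneg (by linarith)]
        · rw [if_neg hy, if_neg hy, zero_sub, abs_neg, abs_of_nonneg hm0]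
      rw [Finset.sum_congr rfl (fun y _ => hterm y), Finset.sum_ite]
      have e1 : Finset.univ.filter (fun y => y ∈ A) = A := by ext y; simp
      have e2 : ∑ y ∈ Finset.univ.filter (fun y => y ∉ A), pi y = 1 - meas pi A := by
        have := Finset.sum_filter_add_sum_filter_not Finset.univ (fun y => y ∈ A) pi
        rw [e1] at this
        have h' : meas pi A + ∑ y ∈ Finset.univ.filter (fun y => y ∉ A), pi y = 1 := by
          rw [meas]; rw [hpi1] at this; exact this
        linarith
      rw [e1, ← Finset.sum_mul, ← Finset.sum_mul, e2]
      rw [show (∑ x ∈ A, pi x) = meas pi A from rfl]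
      ring
    rw [hcompute, pow_zero]
    ring_nf
    exact le_rfl
  | succ n IH =>
    intro A
    have hδ : 0 ≤ 1 - 16 * psiMin P pi * aMax P pi := by
      linarith [delta_le_one hP0 hP1 hpi0 hpi1 hstat hcard]
    calc ∑ y, pi y * rfun P pi (n+1) A y
        = ∑ y, ∫ u in (0:ℝ)..1, pi y * rfun P pi n (evolve P pi A u) y := by
          refine Finset.sum_congr rfl fun y _ => ?_
          rw [rfun_succ, ← intervalIntegral.integral_const_mul]
      _ = ∫ u in (0:ℝ)..1, ∑ y, pi y * rfun P pi n (evolve P pi A u) y :=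
          (integral_finset_sum fun y _ =>
            ((intComp P pi A (fun B => rfun P pi n B y)).const_mul (pi y))).symm
      _ ≤ ∫ u in (0:ℝ)..1, 2 * (1 - 16 * psiMin P pi * aMax P pi)^n
            * (meas pi (evolve P pi A u) * (1 - meas pi (evolve P pi A u))) := by
          refine integral_mono_on zero_le_one ?_ ?_ (fun u _ => IH (evolve P pi A u))
          · exact intComp P pi A (fun B => ∑ y, pi y * rfun P pi n B y)
          · exact (intComp P pi A (fun B => meas pi B * (1 - meas pi B))).const_mul _
      _ = 2 * (1 - 16 * psiMin P pi * aMax P pi)^n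
            * ∫ u in (0:ℝ)..1,
              (meas pi (evolve P pi A u) * (1 - meas pi (evolve P pi A u))) :=
          integral_const_mul _ _
      _ ≤ 2 * (1 - 16 * psiMin P pi * aMax P pi)^n
            * ((1 - 16 * psiMin P pi * aMax P pi) * (meas pi A * (1 - meas pi A))) := by
          refine mul_le_mul_of_nonneg_left (key_step hP0 hP1 hpi0 hpi1 hstat A) ?_
          positivity
      _ = 2 * (1 - 16 * psiMin P pi * aMax P pi)^(n+1) * (meas pi A * (1 - meas pi A)) := by
          ring

end Part4
section Part5

set_option linter.unusedSectionVars false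

variable {V : Type*} [Fintype V] {P : V → V → ℝ} {pi : V → ℝ}

open MeasureTheory intervalIntegral

lemma Qmat_zero (A : Finset V) (y : V) :
    Qmat P pi 0 A y = if y ∈ A then pi y else 0 := by
  unfold Qmat
  rw [pow_zero]
  have h : ∀ x ∈ A, pi x * (1 : Matrix V V ℝ) x y = if x = y then pi x else 0 := by
    intro x _
    rw [Matrix.one_apply]
    split <;> simp
  rw [Finset.sum_congr rfl h, Finset.sum_ite_eq' A y (fun x => pi x)]

lemma Qmat_succ_int (hP0 : ∀ x y, 0 ≤ P x y) (hpi0 : ∀ x, 0 < pi x)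
    (hstat : ∀ y, ∑ x, pi x * P x y = pi y) (n : ℕ) (A : Finset V) (y : V) :
    ∫ u in (0:ℝ)..1, Qmat P pi n (evolve P pi A u) y = Qmat P pi (n+1) A y := by
  have h := int_evolve_sum hP0 hpi0 hstat A (fun z => pi z * (Matrix.of P ^ n) z y)
  calc ∫ u in (0:ℝ)..1, Qmat P pi n (evolve P pi A u) y
      = ∑ z, (flowPt P pi A z / pi z) * (pi z * (Matrix.of P ^ n) z y) := h
    _ = ∑ z, flowPt P pi A z * (Matrix.of P ^ n) z y := by
        refine Finset.sum_congr rfl fun z _ => ?_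
        field_simp [(hpi0 z).ne']
    _ = Qmat P pi (n+1) A y := by
        unfold Qmat flowPt
        rw [pow_succ']
        simp only [Matrix.mul_apply, Matrix.of_apply, Finset.sum_mul, Finset.mul_sum]
        rw [Finset.sum_comm]
        exact Finset.sum_congr rfl fun x _ => Finset.sum_congr rfl fun z _ => by ring

lemma Q_bound (hP0 : ∀ x y, 0 ≤ P x y) (hP1 : ∀ x, ∑ y, P x y = 1)
    (hpi0 : ∀ x, 0 < pi x) (hstat : ∀ y, ∑ x, pi x * P x y = pi y) :
    ∀ (n : ℕ) (A : Finset V) (y : V),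
      |Qmat P pi n A y - pi y * meas pi A| ≤ pi y * rfun P pi n A y := by
  intro n
  induction n with
  | zero =>
    intro A y
    rw [Qmat_zero, rfun_zero]
    have h : (if y ∈ A then pi y else 0) - pi y * meas pi A
        = pi y * ((if y ∈ A then (1:ℝ) else 0) - meas pi A) := by
      split <;> ring
    rw [h, abs_mul, abs_of_pos (hpi0 y)]
  | succ n IH =>
    intro A y
    have hQint := Qmat_succ_int hP0 hpi0 hstat n A y
    have hXm := int_meas_evolve hP0 hP1 hpi0 hstat A
    have hint1 : IntervalIntegrable
        (fun u => Qmat P pi n (evolve P pi A u) y) volume (0:ℝ) 1 :=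
      intComp P pi A (fun B => Qmat P pi n B y)
    have hint2 : IntervalIntegrable
        (fun u => pi y * meas pi (evolve P pi A u)) volume (0:ℝ) 1 :=
      (intComp P pi A (fun B => meas pi B)).const_mul _
    have heq : Qmat P pi (n+1) A y - pi y * meas pi A
        = ∫ u in (0:ℝ)..1,
            (Qmat P pi n (evolve P pi A u) y - pi y * meas pi (evolve P pi A u)) := by
      rw [integral_sub hint1 hint2, hQint, intervalIntegral.integral_const_mul, hXm]
    rw [rfun_succ, heq]
    calc |∫ u in (0:ℝ)..1,
            (Qmat P pi n (evolve P pi A u) y - pi y * meas pi (evolve P pi A u))|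
        ≤ ∫ u in (0:ℝ)..1,
            |Qmat P pi n (evolve P pi A u) y - pi y * meas pi (evolve P pi A u)| :=
          abs_integral_le_integral_abs zero_le_one
      _ ≤ ∫ u in (0:ℝ)..1, pi y * rfun P pi n (evolve P pi A u) y := by
          refine integral_mono_on zero_le_one
            (intComp P pi A (fun B => |Qmat P pi n B y - pi y * meas pi B|))
            ((intComp P pi A (fun B => rfun P pi n B y)).const_mul _)
            (fun u _ => IH (evolve P pi A u) y)
      _ = pi y * ∫ u in (0:ℝ)..1, rfun P pi n (evolve P pi A u) y := integral_const_mul _ _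

lemma tv_bound (hP0 : ∀ x y, 0 ≤ P x y) (hP1 : ∀ x, ∑ y, P x y = 1)
    (hpi0 : ∀ x, 0 < pi x) (hpi1 : ∑ x, pi x = 1)
    (hstat : ∀ y, ∑ x, pi x * P x y = pi y) (hcard : 2 ≤ Fintype.card V)
    (n : ℕ) (x : V) :
    pi x * ∑ y, |(Matrix.of P ^ n) x y - pi y|
      ≤ 2 * (1 - 16 * psiMin P pi * aMax P pi)^n * pi x := by
  have hmx : meas pi ({x} : Finset V) = pi x := by rw [meas, Finset.sum_singleton]
  have hterm : ∀ y, pi x * |(Matrix.of P ^ n) x y - pi y|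
      ≤ pi y * rfun P pi n {x} y := by
    intro y
    have hq := Q_bound hP0 hP1 hpi0 hstat n {x} y
    have hQx : Qmat P pi n ({x} : Finset V) y = pi x * (Matrix.of P ^ n) x y := by
      rw [Qmat, Finset.sum_singleton]
    rw [hQx, hmx] at hq
    have h1 : |pi x * ((Matrix.of P ^ n) x y - pi y)|
        = pi x * |(Matrix.of P ^ n) x y - pi y| := by
      rw [abs_mul, abs_of_pos (hpi0 x)]
    calc pi x * |(Matrix.of P ^ n) x y - pi y|
        = |pi x * ((Matrix.of P ^ n) x y - pi y)| := h1.symm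
      _ = |pi x * (Matrix.of P ^ n) x y - pi y * pi x| := by
          congr 1
          ring
      _ ≤ pi y * rfun P pi n {x} y := hq
  have hsum := rfun_sum hP0 hP1 hpi0 hpi1 hstat hcard n {x}
  rw [hmx] at hsum
  have hδn : 0 ≤ (1 - 16 * psiMin P pi * aMax P pi)^n :=
    pow_nonneg (by linarith [delta_le_one hP0 hP1 hpi0 hpi1 hstat hcard]) n
  calc pi x * ∑ y, |(Matrix.of P ^ n) x y - pi y|
      = ∑ y, pi x * |(Matrix.of P ^ n) x y - pi y| := Finset.mul_sum _ _ _
    _ ≤ ∑ y, pi y * rfun P pi n {x} y := Finset.sum_le_sum fun y _ => hterm y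
    _ ≤ 2 * (1 - 16 * psiMin P pi * aMax P pi)^n * (pi x * (1 - pi x)) := hsum
    _ ≤ 2 * (1 - 16 * psiMin P pi * aMax P pi)^n * pi x := by
        have hx0 := hpi0 x
        nlinarith [hδn, hpi0 x, sq_nonneg (pi x)]

end Part5
section Part6

set_option linter.unusedSectionVars false

variable {V : Type*} [Fintype V] {P : V → V → ℝ} {pi : V → ℝ} {lam : ℂ} {g : V → ℂ}

lemma eigen_pow (hg : ∀ x, ∑ y, (P x y : ℂ) * g y = lam * g x) :
    ∀ (n : ℕ) (x : V), ∑ y, (((Matrix.of P ^ n) x y : ℝ) : ℂ) * g y = lam^n * g x := by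
  intro n
  induction n with
  | zero =>
    intro x
    rw [pow_zero, pow_zero, one_mul]
    have h : ∀ y, (((1 : Matrix V V ℝ) x y : ℝ) : ℂ) * g y
        = if x = y then g y else 0 := by
      intro y
      rw [Matrix.one_apply]
      split <;> simp
    rw [Finset.sum_congr rfl fun y _ => h y, Finset.sum_ite_eq Finset.univ x g,
      if_pos (Finset.mem_univ x)]
  | succ n IH =>
    intro x
    have hrw : ∀ y, (((Matrix.of P ^ (n+1)) x y : ℝ) : ℂ) * g y
        = ∑ z, (P x z : ℂ) * ((((Matrix.of P ^ n) z y : ℝ) : ℂ) * g y) := by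
      intro y
      rw [pow_succ', Matrix.mul_apply]
      push_cast
      rw [Finset.sum_mul]
      exact Finset.sum_congr rfl fun z _ => by rw [Matrix.of_apply, mul_assoc]
    calc ∑ y, (((Matrix.of P ^ (n+1)) x y : ℝ) : ℂ) * g y
        = ∑ y, ∑ z, (P x z : ℂ) * ((((Matrix.of P ^ n) z y : ℝ) : ℂ) * g y) :=
          Finset.sum_congr rfl fun y _ => hrw y
      _ = ∑ z, (P x z : ℂ) * ∑ y, (((Matrix.of P ^ n) z y : ℝ) : ℂ) * g y := by
          rw [Finset.sum_comm]
          exact Finset.sum_congr rfl fun z _ => (Finset.mul_sum _ _ _).symm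
      _ = ∑ z, (P x z : ℂ) * (lam^n * g z) :=
          Finset.sum_congr rfl fun z _ => by rw [IH z]
      _ = lam^n * ∑ z, (P x z : ℂ) * g z := by
          rw [Finset.mul_sum]
          exact Finset.sum_congr rfl fun z _ => by ring
      _ = lam^(n+1) * g x := by rw [hg x]; ring

lemma sum_pi_g (hstat : ∀ y, ∑ x, pi x * P x y = pi y) (hlam : lam ≠ 1)
    (hg : ∀ x, ∑ y, (P x y : ℂ) * g y = lam * g x) :
    ∑ y, (pi y : ℂ) * g y = 0 := by
  have h1 : lam * ∑ y, (pi y : ℂ) * g y = ∑ y, (pi y : ℂ) * g y := by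
    calc lam * ∑ y, (pi y : ℂ) * g y
        = ∑ x, (pi x : ℂ) * (lam * g x) := by
          rw [Finset.mul_sum]
          exact Finset.sum_congr rfl fun x _ => by ring
      _ = ∑ x, (pi x : ℂ) * ∑ y, (P x y : ℂ) * g y :=
          Finset.sum_congr rfl fun x _ => by rw [hg x]
      _ = ∑ x, ∑ y, ((pi x : ℂ) * (P x y : ℂ)) * g y := by
          refine Finset.sum_congr rfl fun x _ => ?_
          rw [Finset.mul_sum]
          exact Finset.sum_congr rfl fun y _ => by ring
      _ = ∑ y, (∑ x, (pi x : ℂ) * (P x y : ℂ)) * g y := by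
          rw [Finset.sum_comm]
          exact Finset.sum_congr rfl fun y _ => (Finset.sum_mul _ _ _).symm
      _ = ∑ y, (pi y : ℂ) * g y := by
          refine Finset.sum_congr rfl fun y _ => ?_
          congr 1
          push_cast
          rw [← hstat y]
          push_cast
          rfl
  have h2 : (lam - 1) * ∑ y, (pi y : ℂ) * g y = 0 := by
    rw [sub_mul, one_mul, h1, sub_self]
  rcases mul_eq_zero.mp h2 with h | h
  · exact absurd (sub_eq_zero.mp h) hlam
  · exact h

end Part6

/-- For a finite irreducible Markov chain with at least two states, every
complex eigenvalue `λ ≠ 1` satisfies `1 − |λ| ≥ 16 Ψ_min A_max`. -/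
theorem stmt16 {V : Type*} [Fintype V] [Nonempty V] (P : V → V → ℝ) (pi : V → ℝ)
    (hP0 : ∀ x y, 0 ≤ P x y) (hP1 : ∀ x, ∑ y, P x y = 1)
    (hirr : ∀ x y : V, ∃ t : ℕ, 0 < (Matrix.of P ^ t) x y)
    (hpi0 : ∀ x, 0 < pi x) (hpi1 : ∑ x, pi x = 1)
    (hstat : ∀ y, ∑ x, pi x * P x y = pi y)
    (hcard : 2 ≤ Fintype.card V)
    (lam : ℂ) (hlam : lam ≠ 1)
    (hev : ∃ g : V → ℂ, g ≠ 0 ∧ ∀ x, ∑ y, (P x y : ℂ) * g y = lam * g x) :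
    16 * psiMin P pi * aMax P pi ≤ 1 - ‖lam‖ := by

  obtain ⟨g, hg0, hg⟩ := hev
  have hδ0 : 0 ≤ 16 * psiMin P pi * aMax P pi :=
    mul_nonneg (mul_nonneg (by norm_num) psiMin_nonneg) aMax_nonneg
  have hδ1 : 16 * psiMin P pi * aMax P pi ≤ 1 :=
    delta_le_one hP0 hP1 hpi0 hpi1 hstat hcard
  set δ := 16 * psiMin P pi * aMax P pi with hδ
  obtain ⟨x, -, hmax⟩ := Finset.exists_max_image Finset.univ
    (fun z => ‖g z‖) ⟨Classical.arbitrary V, Finset.mem_univ _⟩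
  have hgx : 0 < ‖g x‖ := by
    obtain ⟨z, hz⟩ := Function.ne_iff.mp hg0
    exact lt_of_lt_of_le (norm_pos_iff.mpr hz) (hmax z (Finset.mem_univ z))
  have hS := sum_pi_g hstat hlam hg
  have hkey : ∀ n : ℕ, ‖lam‖ ^ n ≤ 2 * (1 - δ)^n := by
    intro n
    have h1 : lam^n * g x
        = ∑ y, ((((Matrix.of P ^ n) x y - pi y : ℝ)) : ℂ) * g y := by
      have : ∑ y, ((((Matrix.of P ^ n) x y - pi y : ℝ)) : ℂ) * g y
          = (∑ y, (((Matrix.of P ^ n) x y : ℝ) : ℂ) * g y)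
            - ∑ y, (pi y : ℂ) * g y := by
        rw [← Finset.sum_sub_distrib]
        refine Finset.sum_congr rfl fun y _ => ?_
        push_cast
        ring
      rw [this, hS, sub_zero, eigen_pow hg n x]
    have h2 : ‖lam^n * g x‖
        ≤ (∑ y, |(Matrix.of P ^ n) x y - pi y|) * ‖g x‖ := by
      rw [h1]
      calc ‖∑ y, ((((Matrix.of P ^ n) x y - pi y : ℝ)) : ℂ) * g y‖
          ≤ ∑ y, ‖((((Matrix.of P ^ n) x y - pi y : ℝ)) : ℂ) * g y‖ :=
            norm_sum_le _ _
        _ ≤ ∑ y, |(Matrix.of P ^ n) x y - pi y| * ‖g x‖ := by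
            refine Finset.sum_le_sum fun y _ => ?_
            rw [norm_mul, Complex.norm_real, Real.norm_eq_abs]
            exact mul_le_mul_of_nonneg_left (hmax y (Finset.mem_univ y)) (abs_nonneg _)
        _ = (∑ y, |(Matrix.of P ^ n) x y - pi y|) * ‖g x‖ :=
            (Finset.sum_mul _ _ _).symm
    have h3 : (∑ y, |(Matrix.of P ^ n) x y - pi y|) ≤ 2 * (1 - δ)^n := by
      have htv := tv_bound hP0 hP1 hpi0 hpi1 hstat hcard n x
      have hx0 := hpi0 x
      rw [← hδ] at htv
      nlinarith [htv]
    have h4 : ‖lam‖ ^ n * ‖g x‖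
        ≤ 2 * (1 - δ)^n * ‖g x‖ := by
      rw [← norm_pow, ← norm_mul]
      exact le_trans h2 (mul_le_mul_of_nonneg_right h3 (norm_nonneg _))
    exact le_of_mul_le_mul_right h4 hgx
  by_contra hcon
  push_neg at hcon
  have hlt : 1 - δ < ‖lam‖ := by linarith
  have ha0 : 0 < ‖lam‖ := lt_of_le_of_lt (by linarith) hlt
  obtain ⟨n, hn⟩ := exists_pow_lt_of_lt_one (show (0:ℝ) < 1/2 by norm_num)
    ((div_lt_one ha0).mpr hlt)
  have hthis := hkey n
  have hpow : (1 - δ)^n = ‖lam‖ ^ n * ((1 - δ)/‖lam‖)^n := by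
    rw [div_pow, mul_div_cancel₀]
    exact pow_ne_zero n (ne_of_gt ha0)
  rw [hpow] at hthis
  nlinarith [pow_pos ha0 n, hn, hthis]

end Stmt16
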